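/- arXiv:2011.09412 — 5 statements merged into one kernel-verified Lean document; each statement's English description precedes it below -/
import Mathlib

section
/- Let $H_A$, $H_B$ be finitely generated free $\mathbb{Z}$-modules and $\Phi : H_A \otimes \widehat{\mathbb{Z}} \to H_B \otimes \widehat{\mathbb{Z}}$ a $\widehat{\mathbb{Z}}$-linear map whose matrix coefficient module $\mathrm{MC}(\Phi; H_A, H_B)$ has $\mathbb{Z}$-rank $1$. Then for each generator $z \in \widehat{\mathbb{Z}}$ of $\mathrm{MC}(\Phi; H_A, H_B)$ there exists a unique $\mathbb{Z}$-linear map $F_z : H_A \to H_B$ such that $\Phi$ equals the scalar $z$ times the $\widehat{\mathbb{Z}}$-linear extension of $F_z$; moreover $F_{-z} = -F_z$. -/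
/-- Compatibility condition defining the profinite integers as the inverse limit
of the rings `ZMod (n+1)` under the reduction maps. -/
def ZHatCompat (f : ∀ n : ℕ, ZMod (n + 1)) : Prop :=
  ∀ (m n : ℕ) (h : (m + 1) ∣ (n + 1)), ZMod.castHom h (ZMod (m + 1)) (f n) = f m

/-- The ring of profinite integers `ẑ`, realized as a subring of `∏ₙ ZMod (n+1)`. -/
def ZHat : Subring (∀ n : ℕ, ZMod (n + 1)) where
  carrier := {f | ZHatCompat f}
  zero_mem' := by intro m n h; simp only [Pi.zero_apply, map_zero]
  one_mem' := by intro m n h; simp only [Pi.one_apply, map_one]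
  add_mem' := by
    intro a b ha hb m n h
    have ha' := (ha : ZHatCompat a) m n h
    have hb' := (hb : ZHatCompat b) m n h
    simp only [Pi.add_apply, map_add, ha', hb']
  mul_mem' := by
    intro a b ha hb m n h
    have ha' := (ha : ZHatCompat a) m n h
    have hb' := (hb : ZHatCompat b) m n h
    simp only [Pi.mul_apply, map_mul, ha', hb']
  neg_mem' := by
    intro a ha m n h
    have ha' := (ha : ZHatCompat a) m n h
    simp only [Pi.neg_apply, map_neg, ha']



lemma zmod_key (m n N : ℕ) (hn : 0 < n) (hN : N = n * (m+1)) (h : (m+1) ∣ N)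
    (x : ZMod N) (hx : (n : ZMod N) * x = 0) :
    ZMod.castHom h (ZMod (m + 1)) x = 0 := by
  subst hN
  haveI : NeZero (n * (m+1)) := ⟨by positivity⟩
  have h1 : ((n * x.val : ℕ) : ZMod (n * (m+1))) = 0 := by
    push_cast
    rw [ZMod.natCast_val, ZMod.cast_id]
    exact hx
  rw [ZMod.natCast_eq_zero_iff] at h1
  have h2 : (m+1) ∣ x.val := (mul_dvd_mul_iff_left hn.ne').mp h1
  have : ZMod.castHom h (ZMod (m+1)) x = (x.val : ZMod (m+1)) := by
    rw [ZMod.castHom_apply, ZMod.natCast_val]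
  rw [this, ZMod.natCast_eq_zero_iff]
  exact h2

lemma ZHat.nat_torsion (n : ℕ) (hn : 0 < n) (f : ZHat) (h : (n : ℤ) • f = 0) : f = 0 := by
  apply Subtype.ext
  funext m
  set k := n * (m+1) - 1 with hk
  have hk1 : k + 1 = n * (m+1) := Nat.succ_pred_eq_of_pos (Nat.mul_pos hn (Nat.succ_pos m))
  have hdvd : (m+1) ∣ (k+1) := hk1 ▸ Dvd.intro_left n rfl
  have hcomp := f.2 m k hdvd
  have hx : (((n : ℤ) • f : ZHat) : ∀ j : ℕ, ZMod (j+1)) k = 0 := by rw [h]; rfl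
  have hx2 : (n : ZMod (k+1)) * (f : ∀ j : ℕ, ZMod (j+1)) k = 0 := by
    have : (((n : ℤ) • f : ZHat) : ∀ j : ℕ, ZMod (j+1)) k
        = (n : ZMod (k+1)) * (f : ∀ j : ℕ, ZMod (j+1)) k := by
      push_cast [zsmul_eq_mul]
      rfl
    rwa [this] at hx
  have := zmod_key m n (k+1) hn hk1 hdvd ((f : ∀ j : ℕ, ZMod (j+1)) k) hx2
  rw [hcomp] at this
  simpa using this

instance : NoZeroSMulDivisors ℤ ZHat := by
  constructor
  intro a f h
  by_cases ha : a = 0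
  · exact Or.inl ha
  · right
    rcases Int.natAbs_eq a with he | he
    · exact ZHat.nat_torsion a.natAbs (Int.natAbs_pos.mpr ha) f (by rwa [← he])
    · refine ZHat.nat_torsion a.natAbs (Int.natAbs_pos.mpr ha) f ?_
      rw [show ((a.natAbs : ℤ)) = -a by omega, neg_smul, h, neg_zero]

theorem compatibleSMul_int_aux (Z HB : Type) [CommRing Z] [AddCommGroup HB] [Module ℤ HB] :
    TensorProduct.CompatibleSMul ℤ ℤ Z HB :=
  ⟨fun r m n => by
    have h := Subsingleton.elim ‹Module ℤ HB› (AddCommGroup.toIntModule HB)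
    subst h
    exact TensorProduct.smul_tmul r m n⟩

set_option synthInstance.maxHeartbeats 4000000 in
set_option maxHeartbeats 4000000 in
open TensorProduct in
theorem aux_rank_one_mc
    (HA HB : Type) [AddCommGroup HA] [AddCommGroup HB] [Module ℤ HA] [Module ℤ HB]
    [Module.Free ℤ HA] [Module.Finite ℤ HA] [Module.Free ℤ HB] [Module.Finite ℤ HB]
    (Φ : (ZHat ⊗[ℤ] HA) →ₗ[ZHat] (ZHat ⊗[ℤ] HB))
    (MCmod : Submodule ℤ ZHat)
    (hMC : IsLeast {L : Submodule ℤ ZHat |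
        ∀ u : HA, Φ ((1 : ZHat) ⊗ₜ[ℤ] u) ∈
          LinearMap.range (TensorProduct.map L.subtype (LinearMap.id : HB →ₗ[ℤ] HB))} MCmod)
    (hrank : Module.rank ℤ MCmod = 1) :
    ∀ z : ZHat, MCmod = Submodule.span ℤ {z} →
      (∃! F : HA →ₗ[ℤ] HB, Φ = z • (LinearMap.baseChange ZHat F)) ∧
      (∀ F F' : HA →ₗ[ℤ] HB, Φ = z • (LinearMap.baseChange ZHat F) →
        Φ = (-z) • (LinearMap.baseChange ZHat F') → F' = -F) := by
  intro z hz
  -- z ≠ 0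
  have hz0 : z ≠ 0 := by
    rintro rfl
    rw [hz, Submodule.span_zero_singleton] at hrank
    rw [rank_bot] at hrank
    exact one_ne_zero hrank.symm
  -- injectivity of w ↦ z ⊗ w
  classical
  let b := Module.Free.chooseBasis ℤ HB
  have hinj0 : ∀ w : HB, z ⊗ₜ[ℤ] w = (0 : ZHat ⊗[ℤ] HB) → w = 0 := by
    intro w hw
    apply b.repr.injective
    ext i
    have : (b.repr w i) • z = 0 := by
      have h1 := congrArg ((TensorProduct.rid ℤ ZHat).toLinearMap.comp
        (LinearMap.lTensor ZHat (b.coord i))) hw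
      simpa [LinearMap.lTensor_tmul, TensorProduct.rid_tmul, Module.Basis.coord_apply] using h1
    rcases smul_eq_zero.mp this with h | h
    · simpa using h
    · exact absurd h hz0
  have hcancel : ∀ w w' : HB, z ⊗ₜ[ℤ] w = z ⊗ₜ[ℤ] w' → w = w' := by
    intro w w' h
    have := hinj0 (w - w') (by rw [TensorProduct.tmul_sub, h, sub_self])
    exact sub_eq_zero.mp this
  -- existence of a preimage
  have hmem : ∀ u : HA, ∃ w : HB, Φ ((1:ZHat) ⊗ₜ[ℤ] u) = z ⊗ₜ[ℤ] w := by
    intro u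
    have hm := hMC.1 u
    rw [hz] at hm
    obtain ⟨y, hy⟩ := hm
    rw [← hy]
    clear hy
    induction y using TensorProduct.induction_on with
    | zero => exact ⟨0, by simp⟩
    | tmul l w =>
      obtain ⟨a, ha⟩ := Submodule.mem_span_singleton.mp l.2
      refine ⟨a • w, ?_⟩
      simp only [TensorProduct.map_tmul, Submodule.subtype_apply, LinearMap.id_coe, id_eq]
      haveI : TensorProduct.CompatibleSMul ℤ ℤ ZHat HB := compatibleSMul_int_aux ZHat HB
      rw [← ha, TensorProduct.smul_tmul]
      exact congrArg (fun v => z ⊗ₜ[ℤ] v) (int_smul_eq_zsmul _ a w)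
    | add y1 y2 ih1 ih2 =>
      obtain ⟨w1, hw1⟩ := ih1
      obtain ⟨w2, hw2⟩ := ih2
      exact ⟨w1 + w2, by rw [map_add, hw1, hw2, TensorProduct.tmul_add]⟩
  choose G hG using hmem
  -- G is linear
  have hGadd : ∀ u v : HA, G (u + v) = G u + G v := by
    intro u v
    apply hcancel
    rw [← hG, TensorProduct.tmul_add, map_add, hG, hG, TensorProduct.tmul_add]
  have hGsmul : ∀ (a : ℤ) (u : HA), G (a • u) = a • G u := by
    intro a u
    apply hcancel
    rw [← hG]
    have e : (1:ZHat) ⊗ₜ[ℤ] (a • u) = a • ((1:ZHat) ⊗ₜ[ℤ] u) :=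
      map_zsmul (TensorProduct.mk ℤ ZHat HA 1) a u
    haveI : TensorProduct.CompatibleSMul ℤ ℤ ZHat HB := compatibleSMul_int_aux ZHat HB
    rw [e, map_zsmul, hG, TensorProduct.smul_tmul', TensorProduct.smul_tmul]
    exact congrArg (fun v => z ⊗ₜ[ℤ] v) (int_smul_eq_zsmul _ a (G u))
  let F : HA →ₗ[ℤ] HB :=
    { toFun := G, map_add' := hGadd,
      map_smul' := fun a u => by
        have h1 := hGsmul a u
        rw [← int_smul_eq_zsmul ‹Module ℤ HA› a u] at h1
        rw [← int_smul_eq_zsmul ‹Module ℤ HB› a (G u)] at h1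
        exact h1 }
  -- Φ = z • baseChange F
  have key : ∀ (F' : HA →ₗ[ℤ] HB), (∀ u, Φ ((1:ZHat) ⊗ₜ[ℤ] u) = z ⊗ₜ[ℤ] F' u) →
      Φ = z • LinearMap.baseChange ZHat F' := by
    intro F' hF'
    apply LinearMap.ext
    intro x
    induction x using TensorProduct.induction_on with
    | zero => simp
    | tmul t u =>
      have h1 : (t : ZHat) ⊗ₜ[ℤ] u = t • ((1:ZHat) ⊗ₜ[ℤ] u) := by
        rw [TensorProduct.smul_tmul', smul_eq_mul, mul_one]
      rw [h1, map_smul, hF' u, LinearMap.smul_apply, map_smul,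
        LinearMap.baseChange_tmul]
      rw [smul_comm z t, show z • ((1:ZHat) ⊗ₜ[ℤ] F' u) = z ⊗ₜ[ℤ] F' u by
        rw [TensorProduct.smul_tmul', smul_eq_mul, mul_one]]
    | add x1 x2 ih1 ih2 => rw [map_add, map_add, ih1, ih2]
  have hΦF : Φ = z • LinearMap.baseChange ZHat F := key F hG
  -- converse: from the equation, recover values
  have heval : ∀ (F' : HA →ₗ[ℤ] HB), Φ = z • LinearMap.baseChange ZHat F' →
      ∀ u, Φ ((1:ZHat) ⊗ₜ[ℤ] u) = z ⊗ₜ[ℤ] F' u := by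
    intro F' hF' u
    rw [hF', LinearMap.smul_apply, LinearMap.baseChange_tmul]
    rw [TensorProduct.smul_tmul', smul_eq_mul, mul_one]
  constructor
  · refine ⟨F, hΦF, ?_⟩
    intro F' hF'
    apply LinearMap.ext
    intro u
    exact hcancel _ _ (by rw [← heval F' hF' u, hG u]; rfl)
  · intro F1 F2 h1 h2
    apply LinearMap.ext
    intro u
    have e1 := heval F1 h1 u
    have e2 : Φ ((1:ZHat) ⊗ₜ[ℤ] u) = z ⊗ₜ[ℤ] (-(F2 u)) := by
      rw [h2, LinearMap.smul_apply, LinearMap.baseChange_tmul,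
        TensorProduct.smul_tmul', smul_eq_mul, mul_one]
      rw [TensorProduct.neg_tmul, TensorProduct.tmul_neg]
    have := hcancel _ _ (e2.symm.trans e1)
    simp only [LinearMap.neg_apply]
    rw [← this, neg_neg]

set_option synthInstance.maxHeartbeats 1000000 in
set_option maxHeartbeats 1000000 in
open TensorProduct in
/-- If the matrix coefficient module `MC(Φ; H_A, H_B)` (the smallest
`ℤ`-submodule `L ⊆ ẑ` with `Φ(H_A ⊗ 1) ⊆ H_B ⊗ L`) has `ℤ`-rank `1`, then for each
generator `z` of it there is a unique `ℤ`-linear `F_z : H_A → H_B` with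
`Φ = z • (F_z ⊗ ẑ)`; moreover `F_{-z} = -F_z`. -/
theorem rank_one_matrix_coefficient_module
    (HA HB : Type) [AddCommGroup HA] [AddCommGroup HB] [Module ℤ HA] [Module ℤ HB]
    [Module.Free ℤ HA] [Module.Finite ℤ HA] [Module.Free ℤ HB] [Module.Finite ℤ HB]
    (Φ : (ZHat ⊗[ℤ] HA) →ₗ[ZHat] (ZHat ⊗[ℤ] HB))
    (MCmod : Submodule ℤ ZHat)
    (hMC : IsLeast {L : Submodule ℤ ZHat |
        ∀ u : HA, Φ ((1 : ZHat) ⊗ₜ[ℤ] u) ∈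
          LinearMap.range (TensorProduct.map L.subtype (LinearMap.id : HB →ₗ[ℤ] HB))} MCmod)
    (hrank : Module.rank ℤ MCmod = 1) :
    ∀ z : ZHat, MCmod = Submodule.span ℤ {z} →
      (∃! F : HA →ₗ[ℤ] HB, Φ = z • (LinearMap.baseChange ZHat F)) ∧
      (∀ F F' : HA →ₗ[ℤ] HB, Φ = z • (LinearMap.baseChange ZHat F) →
        Φ = (-z) • (LinearMap.baseChange ZHat F') → F' = -F) :=
  aux_rank_one_mc HA HB Φ MCmod hMC hrank
end

section
/- Let $H_A$, $H_B$ be finitely generated free $\mathbb{Z}$-modules, $\Phi : H_A \otimes \widehat{\mathbb{Z}} \to H_B \otimes \widehat{\mathbb{Z}}$ a $\widehat{\mathbb{Z}}$-linear map, and $L_A \subseteq H_A$, $L_B \subseteq H_B$ finite-index $\mathbb{Z}$-submodules with $\Phi(L_A \otimes \widehat{\mathbb{Z}}) \subseteq L_B \otimes \widehat{\mathbb{Z}}$. Then the matrix coefficient module $\mathrm{MC}(\Phi; L_A, L_B)$ of the restricted map is commensurable with $\mathrm{MC}(\Phi; H_A, H_B)$ as $\mathbb{Z}$-submodules of $\widehat{\mathbb{Z}}$;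 in particular the two modules have equal $\mathbb{Z}$-rank. -/
set_option synthInstance.maxHeartbeats 1000000
set_option maxHeartbeats 1000000

lemma zhat_natCast_mul_eq_zero {n : ℕ} (hn : n ≠ 0) {x : ZHat} (h : (n : ZHat) * x = 0) :
    x = 0 := by
  have hx : ∀ j, (n : ZMod (j+1)) * (x : ∀ k : ℕ, ZMod (k + 1)) j = 0 := by
    intro j
    have h2 : (((n : ZHat) * x : ZHat) : ∀ k : ℕ, ZMod (k + 1)) j = 0 := by rw [h]; rfl
    have h3 : ((n : ZHat) : ∀ k : ℕ, ZMod (k + 1)) j = (n : ZMod (j+1)) := by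
      push_cast
      rfl
    rw [show (((n : ZHat) * x : ZHat) : ∀ k : ℕ, ZMod (k + 1)) j
        = ((n : ZHat) : ∀ k : ℕ, ZMod (k + 1)) j * (x : ∀ k : ℕ, ZMod (k + 1)) j from rfl,
      h3] at h2
    exact h2
  have hN : 0 < n := Nat.pos_of_ne_zero hn
  apply Subtype.ext
  funext m
  have hj1 : n * (m+1) - 1 + 1 = n * (m+1) := Nat.succ_pred_eq_of_pos (Nat.mul_pos hN (Nat.succ_pos m))
  set j := n * (m+1) - 1 with hjdef
  have hdvd : (m+1) ∣ (j+1) := by rw [hj1]; exact dvd_mul_left _ _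
  have hcomp := (x.2 : ZHatCompat x.1) m j hdvd
  set v := (x : ∀ k : ℕ, ZMod (k + 1)) j with hvdef
  set V := v.val with hVdef
  have hVv : ((V : ℕ) : ZMod (j+1)) = v := ZMod.natCast_zmod_val v
  have hcV : ((n * V : ℕ) : ZMod (j+1)) = 0 := by
    push_cast
    rw [hVv]
    exact hx j
  have hdv : (j+1) ∣ n * V := (ZMod.natCast_eq_zero_iff _ _).mp hcV
  rw [hj1] at hdv
  have hmV : (m+1) ∣ V := (Nat.mul_dvd_mul_iff_left hN).mp hdv
  have h0 : ((V:ℕ) : ZMod (m+1)) = 0 := (ZMod.natCast_eq_zero_iff _ _).mpr hmV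
  calc (x : ∀ k : ℕ, ZMod (k + 1)) m = ZMod.castHom hdvd (ZMod (m+1)) v := hcomp.symm
    _ = ZMod.castHom hdvd (ZMod (m+1)) ((V : ℕ) : ZMod (j+1)) := by rw [hVv]
    _ = ((V:ℕ) : ZMod (m+1)) := by rw [map_natCast]
    _ = 0 := h0

lemma zhat_natCast_mul_injective {n : ℕ} (hn : n ≠ 0) :
    Function.Injective (fun x : ZHat => (n : ZHat) * x) := by
  intro x y hxy
  have h : (n : ZHat) * (x - y) = 0 := by
    rw [mul_sub, sub_eq_zero]
    exact hxy
  have := zhat_natCast_mul_eq_zero hn h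
  exact sub_eq_zero.mp this

open TensorProduct in
lemma zhat_coord_mem_iff {B : Type} [AddCommGroup B] [Module ℤ B] {ι : Type} [Fintype ι]
    [DecidableEq ι] (b : Module.Basis ι ℤ B) (L : Submodule ℤ ZHat) (x : ZHat ⊗[ℤ] B) :
    x ∈ LinearMap.range (TensorProduct.map L.subtype (LinearMap.id : B →ₗ[ℤ] B)) ↔
      ∀ i, (Algebra.TensorProduct.basis ZHat b).repr x i ∈ L := by
  constructor
  · rintro ⟨y, rfl⟩
    induction y using TensorProduct.induction_on with
    | zero => intro i; simp [zero_mem]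
    | tmul l p =>
      intro i
      have : TensorProduct.map L.subtype (LinearMap.id : B →ₗ[ℤ] B) (l ⊗ₜ p)
          = (l : ZHat) ⊗ₜ p := by simp
      rw [this, Algebra.TensorProduct.basis_repr_tmul]
      have : ((l : ZHat) • Finsupp.mapRange (algebraMap ℤ ZHat) (map_zero _) (b.repr p)) i
          = (b.repr p i) • (l : ZHat) := by
        simp [Finsupp.smul_apply, Algebra.smul_def, zsmul_eq_mul, mul_comm]
      rw [this]
      exact L.smul_mem _ l.2
    | add z w hz hw =>
      intro i
      rw [map_add, map_add, Finsupp.add_apply]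
      exact L.add_mem (hz i) (hw i)
  · intro h
    refine ⟨∑ i, (⟨(Algebra.TensorProduct.basis ZHat b).repr x i, h i⟩ : L) ⊗ₜ b i, ?_⟩
    rw [map_sum]
    have : ∀ i, TensorProduct.map L.subtype (LinearMap.id : B →ₗ[ℤ] B)
        ((⟨(Algebra.TensorProduct.basis ZHat b).repr x i, h i⟩ : L) ⊗ₜ b i)
        = ((Algebra.TensorProduct.basis ZHat b).repr x i) • (Algebra.TensorProduct.basis ZHat b) i := by
      intro i
      rw [Algebra.TensorProduct.basis_repr_symm_apply']
      simp
    rw [Finset.sum_congr rfl fun i _ => this i]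
    exact Module.Basis.sum_repr _ x

open TensorProduct in
lemma zhat_baseChange_map {P Q : Type} [AddCommGroup P] [Module ℤ P] [AddCommGroup Q] [Module ℤ Q]
    (f : P →ₗ[ℤ] Q) (L : Submodule ℤ ZHat) (z : L ⊗[ℤ] P) :
    LinearMap.baseChange ZHat f (TensorProduct.map L.subtype (LinearMap.id : P →ₗ[ℤ] P) z) =
    TensorProduct.map L.subtype (LinearMap.id : Q →ₗ[ℤ] Q)
      (TensorProduct.map (LinearMap.id : L →ₗ[ℤ] L) f z) := by
  induction z using TensorProduct.induction_on with
  | zero => simp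
  | tmul l p => simp [LinearMap.baseChange_tmul]
  | add a c ha hc => simp only [map_add, ha, hc]


/-- Multiplication by a natural number as a `ℤ`-linear map. -/
def nsmulLin (n : ℕ) (P : Type) [AddCommGroup P] [Module ℤ P] : P →ₗ[ℤ] P :=
  LinearMap.lsmul ℤ P (n : ℤ)

@[simp] lemma nsmulLin_apply (n : ℕ) (P : Type) [AddCommGroup P] [Module ℤ P] (x : P) :
    nsmulLin n P x = n • x := by
  rw [nsmulLin, LinearMap.lsmul_apply, Nat.cast_smul_eq_nsmul]

open TensorProduct in
lemma zhat_baseChange_nsmul {P : Type} [AddCommGroup P] [Module ℤ P] (n : ℕ)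
    (f : P →ₗ[ℤ] P) (hf : ∀ p, f p = n • p) (y : ZHat ⊗[ℤ] P) :
    LinearMap.baseChange ZHat f y = n • y := by
  induction y using TensorProduct.induction_on with
  | zero => simp
  | tmul a p =>
    rw [LinearMap.baseChange_tmul, hf p]
    exact map_nsmul ((TensorProduct.mk ℤ ZHat P) a) n p
  | add a c ha hc => rw [map_add, ha, hc, smul_add]

set_option synthInstance.maxHeartbeats 1000000 in
set_option maxHeartbeats 1000000 in
open TensorProduct in
/-- For finite-index `ℤ`-submodules `L_A ⊆ H_A`, `L_B ⊆ H_B`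
(presented as injective maps `iA : KA → H_A`, `iB : KB → H_B` with finite cokernels)
such that `Φ(L_A ⊗ ẑ) ⊆ L_B ⊗ ẑ` (witnessed by the restricted map `Φ'`), the matrix
coefficient module of the restriction is commensurable with that of `Φ`, and they have
equal `ℤ`-rank.  The matrix coefficient modules are the least submodules `M`, `M'`
satisfying their defining property. -/
theorem matrix_coefficient_module_commensurable_of_finite_index
    (HA HB KA KB : Type) [AddCommGroup HA] [AddCommGroup HB] [Module ℤ HA] [Module ℤ HB]
    [AddCommGroup KA] [AddCommGroup KB] [Module ℤ KA] [Module ℤ KB]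
    [Module.Free ℤ HA] [Module.Finite ℤ HA] [Module.Free ℤ HB] [Module.Finite ℤ HB]
    (Φ : (ZHat ⊗[ℤ] HA) →ₗ[ZHat] (ZHat ⊗[ℤ] HB))
    (iA : KA →ₗ[ℤ] HA) (iB : KB →ₗ[ℤ] HB)
    (hiA : Function.Injective iA) (hiB : Function.Injective iB)
    (hfinA : Finite (HA ⧸ LinearMap.range iA)) (hfinB : Finite (HB ⧸ LinearMap.range iB))
    (Φ' : (ZHat ⊗[ℤ] KA) →ₗ[ZHat] (ZHat ⊗[ℤ] KB))
    (hrestr : (LinearMap.baseChange ZHat iB).comp Φ' =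
      Φ.comp (LinearMap.baseChange ZHat iA))
    (M M' : Submodule ℤ ZHat)
    (hM : IsLeast {L : Submodule ℤ ZHat |
        ∀ u : HA, Φ ((1 : ZHat) ⊗ₜ[ℤ] u) ∈
          LinearMap.range (TensorProduct.map L.subtype (LinearMap.id : HB →ₗ[ℤ] HB))} M)
    (hM' : IsLeast {L : Submodule ℤ ZHat |
        ∀ u : KA, Φ' ((1 : ZHat) ⊗ₜ[ℤ] u) ∈
          LinearMap.range (TensorProduct.map L.subtype (LinearMap.id : KB →ₗ[ℤ] KB))} M') :
    (∃ a : ℤ, a ≠ 0 ∧ ∀ x ∈ M, a • x ∈ M') ∧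
    (∃ b : ℤ, b ≠ 0 ∧ ∀ x ∈ M', b • x ∈ M) ∧
    Module.rank ℤ M' = Module.rank ℤ M := by
  classical
  -- basis of HB
  set e : Module.Basis (Module.Free.ChooseBasisIndex ℤ HB) ℤ HB := Module.Free.chooseBasis ℤ HB with he
  -- basis of KB, built by hand
  letI : Module ℤ ↥(LinearMap.range iB) := (LinearMap.range iB).module
  obtain ⟨nK, bK⟩ := Submodule.basisOfPid e (LinearMap.range iB)
  set c := bK.map (LinearEquiv.ofInjective iB hiB).symm with hcdef
  -- the two integers
  set nA : ℕ := Nat.card (HA ⧸ LinearMap.range iA) with hnA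
  set nB : ℕ := Nat.card (HB ⧸ LinearMap.range iB) with hnB
  have hnA0 : 0 < nA := Nat.card_pos
  have hnB0 : 0 < nB := Nat.card_pos
  have hkeyA : ∀ u : HA, ∃ k : KA, iA k = nA • u := by
    intro u
    have h0 : (LinearMap.range iA).mkQ (nA • u) = 0 := by
      rw [map_nsmul]
      exact card_nsmul_eq_zero'
    have h1 : nA • u ∈ LinearMap.range iA := by
      rwa [Submodule.mkQ_apply, Submodule.Quotient.mk_eq_zero] at h0
    exact h1.imp fun k hk => hk
  have hkeyB : ∀ v : HB, ∃ k : KB, iB k = nB • v := by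
    intro v
    have h0 : (LinearMap.range iB).mkQ (nB • v) = 0 := by
      rw [map_nsmul]
      exact card_nsmul_eq_zero'
    have h1 : nB • v ∈ LinearMap.range iB := by
      rwa [Submodule.mkQ_apply, Submodule.Quotient.mk_eq_zero] at h0
    exact h1.imp fun k hk => hk
  -- Direction 1 : nA • M ⊆ M'
  have hdir1 : ∀ x ∈ M, (nA : ℕ) • x ∈ M' := by
    have hL₀S : M'.comap (nsmulLin nA ZHat) ∈ {L : Submodule ℤ ZHat |
        ∀ u : HA, Φ ((1 : ZHat) ⊗ₜ[ℤ] u) ∈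
          LinearMap.range (TensorProduct.map L.subtype (LinearMap.id : HB →ₗ[ℤ] HB))} := by
      intro u
      obtain ⟨k, hk⟩ := hkeyA u
      obtain ⟨z, hz⟩ := hM'.1 k
      have h1 : (nA : ℕ) • Φ ((1 : ZHat) ⊗ₜ[ℤ] u) = Φ ((1 : ZHat) ⊗ₜ[ℤ] (nA • u)) := by
        rw [show (1 : ZHat) ⊗ₜ[ℤ] (nA • u) = nA • ((1 : ZHat) ⊗ₜ[ℤ] u) from
          map_nsmul ((TensorProduct.mk ℤ ZHat HA) 1) nA u, map_nsmul]
      have h2 : Φ ((1 : ZHat) ⊗ₜ[ℤ] (nA • u)) =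
          LinearMap.baseChange ZHat iB (Φ' ((1 : ZHat) ⊗ₜ[ℤ] k)) := by
        have h3 := LinearMap.congr_fun hrestr ((1 : ZHat) ⊗ₜ[ℤ] k)
        rw [LinearMap.comp_apply, LinearMap.comp_apply, LinearMap.baseChange_tmul, hk] at h3
        exact h3.symm
      have h4 : (nA : ℕ) • Φ ((1 : ZHat) ⊗ₜ[ℤ] u) ∈
          LinearMap.range (TensorProduct.map M'.subtype (LinearMap.id : HB →ₗ[ℤ] HB)) := by
        rw [h1, h2, ← hz, zhat_baseChange_map iB M' z]
        exact ⟨TensorProduct.map LinearMap.id iB z, rfl⟩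
      have h5 := (zhat_coord_mem_iff e M' _).mp h4
      refine (zhat_coord_mem_iff e (M'.comap (nsmulLin nA ZHat)) _).mpr ?_
      intro i
      rw [Submodule.mem_comap, nsmulLin_apply]
      have h6 : (Algebra.TensorProduct.basis ZHat e).repr
            ((nA : ℕ) • Φ ((1 : ZHat) ⊗ₜ[ℤ] u)) i
          = nA • (Algebra.TensorProduct.basis ZHat e).repr (Φ ((1 : ZHat) ⊗ₜ[ℤ] u)) i := by
        rw [map_nsmul]
        exact map_nsmul (Finsupp.applyAddHom i) nA _
      rw [← h6]
      exact h5 i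
    have hle := hM.2 hL₀S
    intro x hx
    have h7 := hle hx
    rwa [Submodule.mem_comap, nsmulLin_apply] at h7
  -- the map w : HB → KB with iB ∘ w = nB • id
  have hwex : ∀ i, ∃ k : KB, iB k = nB • e i := fun i => hkeyB (e i)
  set w : HB →ₗ[ℤ] KB := Module.Basis.constr e ℕ (fun i => Classical.choose (hwex i)) with hw
  have hw1 : iB.comp w = nsmulLin nB HB := by
    refine Module.Basis.ext e fun i => ?_
    rw [LinearMap.comp_apply, hw, Module.Basis.constr_basis, nsmulLin_apply]
    exact Classical.choose_spec (hwex i)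
  have hw2 : w.comp iB = nsmulLin nB KB := by
    refine LinearMap.ext fun k => ?_
    apply hiB
    have h8 := LinearMap.congr_fun hw1 (iB k)
    rw [LinearMap.comp_apply] at h8
    rw [LinearMap.comp_apply, h8, nsmulLin_apply, nsmulLin_apply, map_nsmul]
  -- Direction 2 : nB • M' ⊆ M
  have hdir2 : ∀ x ∈ M', (nB : ℕ) • x ∈ M := by
    have hL₁S : M.comap (nsmulLin nB ZHat) ∈ {L : Submodule ℤ ZHat |
        ∀ u : KA, Φ' ((1 : ZHat) ⊗ₜ[ℤ] u) ∈
          LinearMap.range (TensorProduct.map L.subtype (LinearMap.id : KB →ₗ[ℤ] KB))} := by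
      intro k
      obtain ⟨z, hz⟩ := hM.1 (iA k)
      have h2 : LinearMap.baseChange ZHat iB (Φ' ((1 : ZHat) ⊗ₜ[ℤ] k)) =
          Φ ((1 : ZHat) ⊗ₜ[ℤ] (iA k)) := by
        have h3 := LinearMap.congr_fun hrestr ((1 : ZHat) ⊗ₜ[ℤ] k)
        rw [LinearMap.comp_apply, LinearMap.comp_apply, LinearMap.baseChange_tmul] at h3
        exact h3
      have h4 : (nB : ℕ) • Φ' ((1 : ZHat) ⊗ₜ[ℤ] k) =
          LinearMap.baseChange ZHat w (Φ ((1 : ZHat) ⊗ₜ[ℤ] (iA k))) := by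
        rw [← h2, ← LinearMap.comp_apply, ← LinearMap.baseChange_comp, hw2,
          zhat_baseChange_nsmul nB (nsmulLin nB KB) (fun p => nsmulLin_apply nB KB p)]
      have h5 : (nB : ℕ) • Φ' ((1 : ZHat) ⊗ₜ[ℤ] k) ∈
          LinearMap.range (TensorProduct.map M.subtype (LinearMap.id : KB →ₗ[ℤ] KB)) := by
        rw [h4, ← hz, zhat_baseChange_map w M z]
        exact ⟨TensorProduct.map LinearMap.id w z, rfl⟩
      have h6 := (zhat_coord_mem_iff c M _).mp h5
      refine (zhat_coord_mem_iff c (M.comap (nsmulLin nB ZHat)) _).mpr ?_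
      intro j
      rw [Submodule.mem_comap, nsmulLin_apply]
      have h7 : (Algebra.TensorProduct.basis ZHat c).repr
            ((nB : ℕ) • Φ' ((1 : ZHat) ⊗ₜ[ℤ] k)) j
          = nB • (Algebra.TensorProduct.basis ZHat c).repr (Φ' ((1 : ZHat) ⊗ₜ[ℤ] k)) j := by
        rw [map_nsmul]
        exact map_nsmul (Finsupp.applyAddHom j) nB _
      rw [← h7]
      exact h6 j
    have hle := hM'.2 hL₁S
    intro x hx
    have h9 := hle hx
    rwa [Submodule.mem_comap, nsmulLin_apply] at h9
  -- rank equality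
  have hnAZ : (nA : ℤ) ≠ 0 := by exact_mod_cast hnA0.ne'
  have hnBZ : (nB : ℤ) ≠ 0 := by exact_mod_cast hnB0.ne'
  have hmap : ∀ (n : ℕ) (_ : n ≠ 0) (P Q : Submodule ℤ ZHat)
      (_ : ∀ x ∈ P, (n : ℕ) • x ∈ Q), Module.rank ℤ P ≤ Module.rank ℤ Q := by
    intro n hn P Q h
    have hcod : ∀ x : P, ((LinearMap.mul ℤ ZHat (n : ZHat)).comp P.subtype) x ∈ Q := by
      intro x
      rw [LinearMap.comp_apply, LinearMap.mul_apply', ← nsmul_eq_mul]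
      exact h x.1 x.2
    refine LinearMap.rank_le_of_injective
      (LinearMap.codRestrict Q ((LinearMap.mul ℤ ZHat (n : ZHat)).comp P.subtype) hcod) ?_
    rw [← LinearMap.ker_eq_bot, LinearMap.ker_codRestrict, LinearMap.ker_eq_bot]
    refine Function.Injective.comp (g := LinearMap.mul ℤ ZHat (n : ZHat)) ?_
      (Submodule.injective_subtype P)
    intro x y hxy
    rw [LinearMap.mul_apply', LinearMap.mul_apply'] at hxy
    exact zhat_natCast_mul_injective hn hxy
  have hrank : Module.rank ℤ M' = Module.rank ℤ M :=
    le_antisymm (hmap nB hnB0.ne' M' M hdir2) (hmap nA hnA0.ne' M M' hdir1)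
  refine ⟨⟨(nA : ℤ), hnAZ, ?_⟩, ⟨(nB : ℤ), hnBZ, ?_⟩, hrank⟩
  · intro x hx
    have h := hdir1 x hx
    rwa [natCast_zsmul]
  · intro x hx
    have h := hdir2 x hx
    rwa [natCast_zsmul]
end

section
/- Let $S$ be a commutative domain, let $P$ be an $m \times n$ matrix over $S$, and suppose there exist an $n \times m$ matrix $Q$ over $S$ and a nonzero $a \in S$ with $PQP = aP$. Let $\widehat{R}$ be a commutative topological ring containing $S$ as a dense subring, with $\widehat{R}$ Hausdorff and with continuous ring operations. Then for every $X \in \widehat{R}^n$ with $PX = 0$, the vector $aX$ lies in the closure of $\{Y \in S^n : PY = 0\}$ in $\widehat{R}^n$. -/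
/-- Let `S` be a commutative domain, `P` an `m × n` matrix over `S`,
and suppose `P Q P = a P` with `a ≠ 0`.  Let `R̂` be a Hausdorff commutative topological
ring containing `S` as a dense subring.  Then for every `X ∈ R̂ⁿ` with `P X = 0`, the
vector `a X` lies in the closure of the set of kernel vectors of `P` with entries in `S`. -/
theorem smul_kernel_vector_mem_closure
    (S : Type) [CommRing S] [IsDomain S] (m n : ℕ)
    (P : Matrix (Fin m) (Fin n) S) (Q : Matrix (Fin n) (Fin m) S) (a : S)
    (ha : a ≠ 0) (hPQP : P * Q * P = a • P)
    (Rhat : Type) [CommRing Rhat] [TopologicalSpace Rhat] [IsTopologicalRing Rhat]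
    [T2Space Rhat]
    (ι : S →+* Rhat) (hinj : Function.Injective ι) (hdense : DenseRange ι) :
    ∀ X : Fin n → Rhat, (P.map (fun s => ι s)).mulVec X = 0 →
      (fun i => ι a * X i) ∈
        closure {Z : Fin n → Rhat |
          ∃ Y : Fin n → S, P.mulVec Y = 0 ∧ Z = fun i => ι (Y i)} := by
  intro X hX
  -- the continuous map W ↦ ι a • W - (QP) W
  set f : (Fin n → Rhat) → (Fin n → Rhat) :=
    fun W i => ι a * W i - ((Q * P).map ι).mulVec W i with hf
  have hfc : Continuous f := by
    refine continuous_pi fun i => ?_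
    simp only [hf, Matrix.mulVec, dotProduct]
    exact ((continuous_const.mul (continuous_apply i)).sub
      (continuous_finset_sum _ fun j _ => continuous_const.mul (continuous_apply j)))
  -- X lies in the closure of the set of vectors with entries in S
  have hXmem : X ∈ closure {W : Fin n → Rhat | ∃ Y : Fin n → S, W = fun i => ι (Y i)} := by
    have : {W : Fin n → Rhat | ∃ Y : Fin n → S, W = fun i => ι (Y i)} =
        Set.pi Set.univ (fun _ : Fin n => Set.range ι) := by
      ext W
      constructor
      · rintro ⟨Y, rfl⟩ i _; exact ⟨Y i, rfl⟩
      · intro h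
        choose Y hY using fun i => h i (Set.mem_univ i)
        exact ⟨Y, by funext i; exact (hY i).symm⟩
    rw [this, closure_pi_set]
    intro i _
    exact hdense (X i)
  -- f maps S-vectors into the target set
  have hmaps : Set.MapsTo f {W : Fin n → Rhat | ∃ Y : Fin n → S, W = fun i => ι (Y i)}
      {Z : Fin n → Rhat | ∃ Y : Fin n → S, P.mulVec Y = 0 ∧ Z = fun i => ι (Y i)} := by
    rintro W ⟨Y, rfl⟩
    refine ⟨a • Y - (Q * P).mulVec Y, ?_, ?_⟩
    · rw [Matrix.mulVec_sub, Matrix.mulVec_smul, Matrix.mulVec_mulVec, ← Matrix.mul_assoc,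
        hPQP, Matrix.smul_mulVec, sub_self]
    · funext i
      simp only [hf, Pi.sub_apply, Pi.smul_apply, smul_eq_mul, map_sub, map_mul,
        Matrix.mulVec, dotProduct, map_sum, Matrix.map_apply]
  -- and f X = fun i => ι a * X i
  have hfX : f X = fun i => ι a * X i := by
    funext i
    have : ((Q * P).map ι).mulVec X = 0 := by
      have hmap : (Q * P).map (ι : S → Rhat) = Q.map ι * P.map ι :=
        Matrix.map_mul
      rw [hmap, ← Matrix.mulVec_mulVec, hX, Matrix.mulVec_zero]
    simp only [hf, this, Pi.zero_apply, sub_zero]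
  have := map_mem_closure hfc hXmem hmaps
  rwa [hfX] at this
end

section
/- Let $D$ be a compact convex polytope with nonempty interior in real affine $n$-space $\mathbf{A}^n \subseteq \mathbf{P}^n$, and let $q$ be an interior point of $D$. If a projective linear automorphism $\tau$ of $\mathbf{P}^n$ fixes every vertex of $D$ and fixes $q$, then $\tau$ is the identity. -/
open scoped LinearAlgebra.Projectivization

/-- The standard affine chart embedding `ℝⁿ → ℝPⁿ`, `x ↦ [(1, x)]`. -/
noncomputable def projEmb (n : ℕ) (x : Fin n → ℝ) : ℙ ℝ (Fin (n + 1) → ℝ) :=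
  Projectivization.mk ℝ (Fin.cons (1 : ℝ) x : Fin (n + 1) → ℝ)
    (fun h => by
      have h0 := congrFun h 0
      simp [Fin.cons_zero] at h0)

/-- An interior point of the convex hull of a finite set is a convex combination with
all weights strictly positive. -/
lemma exists_pos_weights {E : Type*} [NormedAddCommGroup E] [NormedSpace ℝ E]
    (S : Finset E) (hS : S.Nonempty) (q : E)
    (hq : q ∈ interior (convexHull ℝ (S : Set E))) :
    ∃ t : E → ℝ, (∀ v ∈ S, 0 < t v) ∧ (∑ v ∈ S, t v) = 1 ∧ (∑ v ∈ S, t v • v) = q := by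
  obtain ⟨ε, hε, hball⟩ := Metric.isOpen_iff.1 isOpen_interior q hq
  have hball' : Metric.ball q ε ⊆ convexHull ℝ (S : Set E) :=
    hball.trans interior_subset
  have hm : (0 : ℝ) < (S.card : ℝ) := by
    exact_mod_cast Finset.card_pos.2 hS
  set m : ℝ := (S.card : ℝ) with hmdef
  set b : E := m⁻¹ • ∑ v ∈ S, v with hbdef
  set δ : ℝ := ε / (2 * (‖q - b‖ + 1)) with hδdef
  have hδ : 0 < δ := by
    apply div_pos hε
    positivity
  have hδlt : δ * ‖q - b‖ < ε := by
    have h1 : δ * ‖q - b‖ ≤ δ * (‖q - b‖ + 1) := by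
      apply mul_le_mul_of_nonneg_left (by linarith) hδ.le
    have h2 : δ * (‖q - b‖ + 1) = ε / 2 := by
      rw [hδdef]; field_simp
    linarith
  have hr : q + δ • (q - b) ∈ convexHull ℝ (S : Set E) := by
    apply hball'
    rw [Metric.mem_ball, dist_eq_norm]
    simpa [norm_smul, abs_of_pos hδ] using hδlt
  obtain ⟨w, hw0, hw1, hwsum⟩ := Finset.mem_convexHull'.1 hr
  have h1δ : (0:ℝ) < 1 + δ := by linarith
  refine ⟨fun v => (w v + δ / m) / (1 + δ), ?_, ?_, ?_⟩
  · intro v hv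
    have := hw0 v hv
    have : 0 < w v + δ / m := by positivity
    positivity
  · rw [← Finset.sum_div, Finset.sum_add_distrib, hw1, Finset.sum_const, nsmul_eq_mul,
      ← hmdef]
    rw [mul_div_cancel₀ _ (ne_of_gt hm)]
    exact div_self (ne_of_gt h1δ)
  · have key : ∑ v ∈ S, ((w v + δ / m) / (1 + δ)) • v
        = (1 + δ)⁻¹ • ((q + δ • (q - b)) + δ • b) := by
      rw [← hwsum]
      have hb : δ • b = ∑ v ∈ S, (δ / m) • v := by
        rw [hbdef, smul_smul, Finset.smul_sum, div_eq_mul_inv]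
      rw [hb, ← Finset.sum_add_distrib, Finset.smul_sum]
      apply Finset.sum_congr rfl
      intro v hv
      rw [div_eq_inv_mul, mul_smul, add_smul]
    rw [key]
    have : (q + δ • (q - b)) + δ • b = (1 + δ) • q := by
      rw [smul_sub, add_smul, one_smul]
      abel
    rw [this, smul_smul, inv_mul_cancel₀ (ne_of_gt h1δ), one_smul]

/-- The linear map `z ↦ Fin.cons 0 z`. -/
noncomputable def cons0 (n : ℕ) : (Fin n → ℝ) →ₗ[ℝ] (Fin (n + 1) → ℝ) where
  toFun z := Fin.cons 0 z
  map_add' a b := by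
    funext i
    refine Fin.cases ?_ (fun j => ?_) i <;> simp
  map_smul' r a := by
    funext i
    refine Fin.cases ?_ (fun j => ?_) i <;> simp

/-- Let `D` be a compact convex polytope (the convex hull of a finite
set) with nonempty interior in affine `n`-space `𝐀ⁿ ⊆ ℙⁿ`, and `q` an interior point of
`D`.  If a projective linear automorphism of `ℝPⁿ` fixes every vertex (extreme point)
of `D` and fixes `q`, then it is the identity. -/
theorem projective_automorphism_fixing_polytope_is_id
    (n : ℕ) (V : Finset (Fin n → ℝ))
    (q : Fin n → ℝ)
    (hq : q ∈ interior (convexHull ℝ (V : Set (Fin n → ℝ))))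
    (g : (Fin (n + 1) → ℝ) ≃ₗ[ℝ] (Fin (n + 1) → ℝ))
    (hfix : ∀ v ∈ Set.extremePoints ℝ (convexHull ℝ (V : Set (Fin n → ℝ))),
      Projectivization.map g.toLinearMap g.injective (projEmb n v) = projEmb n v)
    (hfixq : Projectivization.map g.toLinearMap g.injective (projEmb n q) = projEmb n q) :
    ∀ p : ℙ ℝ (Fin (n + 1) → ℝ),
      Projectivization.map g.toLinearMap g.injective p = p := by
  classical
  set K : Set (Fin n → ℝ) := convexHull ℝ (V : Set (Fin n → ℝ)) with hKdef
  set Sset : Set (Fin n → ℝ) := Set.extremePoints ℝ K with hSdef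
  have hSsub : Sset ⊆ (V : Set (Fin n → ℝ)) := extremePoints_convexHull_subset
  have hSfin : Sset.Finite := V.finite_toSet.subset hSsub
  -- Krein–Milman for polytopes: `convexHull Sset = K`
  have hKM : convexHull ℝ Sset = K := by
    have hcomp : IsCompact K := V.finite_toSet.isCompact_convexHull (𝕜 := ℝ)
    have hconv : Convex ℝ K := convex_convexHull ℝ _
    have := closure_convexHull_extremePoints hcomp hconv
    rwa [(hSfin.isClosed_convexHull (𝕜 := ℝ)).closure_eq] at this
  set S : Finset (Fin n → ℝ) := hSfin.toFinset with hSfdef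
  have hScoe : (S : Set (Fin n → ℝ)) = Sset := hSfin.coe_toFinset
  have hqS : q ∈ interior (convexHull ℝ (S : Set (Fin n → ℝ))) := by
    rw [hScoe, hKM]; exact hq
  have hSne : S.Nonempty := by
    rcases Finset.eq_empty_or_nonempty S with h | h
    · exfalso
      rw [h] at hqS
      simp at hqS
    · exact h
  -- lift to ℝ^{n+1}
  set u : (Fin n → ℝ) → (Fin (n + 1) → ℝ) := fun x => Fin.cons 1 x with hudef
  have hu0 : ∀ x, u x 0 = 1 := fun x => rfl
  have husucc : ∀ x (i : Fin n), u x i.succ = x i := fun x i => rfl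
  have hune : ∀ x, u x ≠ 0 := by
    intro x h
    have := congrFun h 0
    simp [hu0] at this
  -- eigenvector equations from the fixed points
  have keyv : ∀ v : Fin n → ℝ, ∃ a : ℝ, v ∈ Sset → g (u v) = a • u v := by
    intro v
    by_cases hv : v ∈ Sset
    · have := hfix v hv
      rw [projEmb, Projectivization.map_mk, Projectivization.mk_eq_mk_iff'] at this
      obtain ⟨a, ha⟩ := this
      exact ⟨a, fun _ => ha.symm⟩
    · exact ⟨0, fun h => absurd h hv⟩
  choose c hc using keyv
  have keyq : ∃ a : ℝ, g (u q) = a • u q := by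
    have := hfixq
    rw [projEmb, Projectivization.map_mk, Projectivization.mk_eq_mk_iff'] at this
    obtain ⟨a, ha⟩ := this
    exact ⟨a, ha.symm⟩
  obtain ⟨μ, hμ⟩ := keyq
  -- positive convex combination for q
  obtain ⟨t, ht0, ht1, htsum⟩ := exists_pos_weights S hSne q hqS
  have hmemS : ∀ v ∈ S, v ∈ Sset := fun v hv => by rwa [← hScoe, Finset.mem_coe]
  have hcS : ∀ v ∈ S, g (u v) = c v • u v := fun v hv => hc v (hmemS v hv)
  -- the lifted combination
  have hliftsum : ∑ v ∈ S, t v • u v = u q := by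
    funext i
    rw [Finset.sum_apply]
    refine Fin.cases ?_ (fun j => ?_) i
    · simp only [Pi.smul_apply, hu0, smul_eq_mul, mul_one]
      exact ht1
    · simp only [Pi.smul_apply, husucc, smul_eq_mul]
      have := congrFun htsum j
      rw [Finset.sum_apply] at this
      simpa using this
  -- the zero combination
  have hw : ∑ v ∈ S, (t v * (c v - μ)) • u v = 0 := by
    have h1 : ∑ v ∈ S, (t v * c v) • u v = μ • u q := by
      rw [← hμ, ← hliftsum, map_sum]
      apply Finset.sum_congr rfl
      intro v hv
      rw [LinearEquiv.map_smul, hcS v hv, smul_smul]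
    have h2 : ∑ v ∈ S, (t v * μ) • u v = μ • u q := by
      rw [← hliftsum, Finset.smul_sum]
      apply Finset.sum_congr rfl
      intro v _
      rw [smul_smul, mul_comm]
    calc ∑ v ∈ S, (t v * (c v - μ)) • u v
        = ∑ v ∈ S, ((t v * c v) • u v - (t v * μ) • u v) := by
          apply Finset.sum_congr rfl
          intro v _
          rw [← sub_smul]; ring_nf
      _ = ∑ v ∈ S, (t v * c v) • u v - ∑ v ∈ S, (t v * μ) • u v := Finset.sum_sub_distrib _ _
      _ = 0 := by rw [h1, h2, sub_self]
  -- first coordinate of hw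
  have hA : ∑ v ∈ S, t v * (c v - μ) = 0 := by
    have := congrFun hw 0
    rw [Finset.sum_apply] at this
    simpa [hu0] using this
  -- apply g to hw and take first coordinate
  have hgw : ∑ v ∈ S, (t v * (c v - μ) * c v) • u v = 0 := by
    have := congrArg (fun x => g x) hw
    simp only [map_zero] at this
    rw [map_sum] at this
    calc ∑ v ∈ S, (t v * (c v - μ) * c v) • u v
        = ∑ v ∈ S, g ((t v * (c v - μ)) • u v) := by
          apply Finset.sum_congr rfl
          intro v hv
          rw [LinearEquiv.map_smul, hcS v hv, smul_smul]
      _ = 0 := this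
  have hB : ∑ v ∈ S, t v * (c v - μ) * c v = 0 := by
    have := congrFun hgw 0
    rw [Finset.sum_apply] at this
    simpa [hu0] using this
  -- all eigenvalues are equal to μ
  have hsq : ∑ v ∈ S, t v * (c v - μ) ^ 2 = 0 := by
    have : ∑ v ∈ S, t v * (c v - μ) ^ 2
        = ∑ v ∈ S, (t v * (c v - μ) * c v - μ * (t v * (c v - μ))) := by
      apply Finset.sum_congr rfl
      intro v _
      ring
    rw [this, Finset.sum_sub_distrib, hB, ← Finset.mul_sum, hA, mul_zero, sub_self]
  have hceq : ∀ v ∈ S, c v = μ := by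
    intro v hv
    have hterm := (Finset.sum_eq_zero_iff_of_nonneg (fun i hi => mul_nonneg (ht0 i hi).le (sq_nonneg _))).1 hsq v hv
    have h2 : (c v - μ) ^ 2 = 0 := by
      rcases mul_eq_zero.1 hterm with h | h
      · exact absurd h (ne_of_gt (ht0 v hv))
      · exact h
    have := pow_eq_zero_iff (n := 2) (by norm_num) |>.1 h2
    linarith [sub_eq_zero.1 this]
  -- eigenspace for μ
  set P : Submodule ℝ (Fin (n + 1) → ℝ) :=
    LinearMap.ker (g.toLinearMap - μ • LinearMap.id) with hPdef
  have hPmem : ∀ x, x ∈ P ↔ g x = μ • x := by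
    intro x
    rw [hPdef, LinearMap.mem_ker, LinearMap.sub_apply, LinearMap.smul_apply,
      LinearMap.id_apply, sub_eq_zero]
    rfl
  have hPu : ∀ v ∈ Sset, u v ∈ P := by
    intro v hv
    rw [hPmem]
    rw [hc v hv]
    have : v ∈ S := by rw [← Finset.mem_coe, hScoe]; exact hv
    rw [hceq v this]
  -- vector span is everything
  have hspan : affineSpan ℝ Sset = ⊤ := by
    have h1 : affineSpan ℝ (convexHull ℝ Sset) = affineSpan ℝ Sset := affineSpan_convexHull _
    have h2 : (interior (convexHull ℝ Sset)).Nonempty := ⟨q, by rw [← hScoe]; exact hqS⟩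
    have := (Convex.interior_nonempty_iff_affineSpan_eq_top (convex_convexHull ℝ Sset)).1 h2
    rwa [h1] at this
  have hvspan : vectorSpan ℝ Sset = ⊤ :=
    AffineSubspace.vectorSpan_eq_top_of_affineSpan_eq_top ℝ _ _ hspan
  -- cons0 of anything is in P
  have hdiff : ∀ z : Fin n → ℝ, cons0 n z ∈ P := by
    intro z
    have hz : z ∈ vectorSpan ℝ Sset := by rw [hvspan]; trivial
    have hle : vectorSpan ℝ Sset ≤ P.comap (cons0 n) := by
      rw [vectorSpan_def]
      apply Submodule.span_le.2
      rintro x hx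
      rw [Set.mem_vsub] at hx
      obtain ⟨a, ha, b, hb, rfl⟩ := hx
      have hab : cons0 n (a -ᵥ b) = u a - u b := by
        funext i
        refine Fin.cases ?_ (fun j => ?_) i <;>
          simp [cons0, hudef, Fin.cons_zero, Fin.cons_succ]
      rw [SetLike.mem_coe, Submodule.mem_comap, hab]
      exact Submodule.sub_mem P (hPu a ha) (hPu b hb)
    exact hle hz
  -- every vector is in P
  obtain ⟨v₀, hv₀⟩ := hSne
  have hPtop : ∀ x : Fin (n + 1) → ℝ, x ∈ P := by
    intro x
    have hdecomp : x = (x 0) • u v₀ + cons0 n (fun i => x i.succ - x 0 * v₀ i) := by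
      funext i
      refine Fin.cases ?_ (fun j => ?_) i <;>
        simp [cons0, hudef, Fin.cons_zero, Fin.cons_succ]
    rw [hdecomp]
    exact Submodule.add_mem P (Submodule.smul_mem P _ (hPu v₀ (hmemS v₀ hv₀))) (hdiff _)
  have hgx : ∀ x, g x = μ • x := fun x => (hPmem x).1 (hPtop x)
  -- conclude
  intro p
  induction p using Projectivization.ind with
  | h v hv =>
    rw [Projectivization.map_mk, Projectivization.mk_eq_mk_iff']
    exact ⟨μ, (hgx v).symm⟩
end

section
/- Let $A, B \in \mathrm{GL}(r, \mathbb{Z})$, let $\mu \in \widehat{\mathbb{Z}}^{\times}$ be a unit of the profinite integers, and suppose $A$ is conjugate in $\mathrm{GL}(r, \widehat{\mathbb{Z}})$ to the $\mu$-th power $B^{\mu}$ of $B$. Set $a(t) = \det(1 - tA)$ and $b(t) = \det(1 - tB)$ in $\mathbb{Z}[t]$. Then the principal ideals $(a(t^{\mu}))$ and $(b(t))$ of the completed group algebra $\widehat{\mathbb{Z}}[[t^{\widehat{\mathbb{Z}}}]]$ are equal. -/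
/-- The transition ring homomorphisms of the inverse system of finite group algebras
`(ℤ/l)[t^{ℤ/d}]` (along the diagonal cofinal subsystem `l = d = n+1`). -/
noncomputable def GATrans (m n : ℕ) (h : (m + 1) ∣ (n + 1)) :
    MonoidAlgebra (ZMod (n + 1)) (Multiplicative (ZMod (n + 1))) →+*
      MonoidAlgebra (ZMod (m + 1)) (Multiplicative (ZMod (m + 1))) :=
  MonoidAlgebra.liftNCRingHom
    ((MonoidAlgebra.singleOneRingHom).comp (ZMod.castHom h (ZMod (m + 1))))
    ((MonoidAlgebra.of (ZMod (m + 1)) (Multiplicative (ZMod (m + 1)))).comp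
      (AddMonoidHom.toMultiplicative ((ZMod.castHom h (ZMod (m + 1))).toAddMonoidHom)))
    (fun _ _ => Commute.all _ _)

/-- Compatibility condition for the completed group algebra `ẑ[[t^ẑ]]`. -/
def GACompat (f : ∀ n : ℕ, MonoidAlgebra (ZMod (n + 1)) (Multiplicative (ZMod (n + 1)))) :
    Prop :=
  ∀ (m n : ℕ) (h : (m + 1) ∣ (n + 1)), GATrans m n h (f n) = f m

/-- The completed group algebra `ẑ[[t^ẑ]]`, realized as the inverse limit of the finite
group algebras `(ℤ/(n+1))[t^{ℤ/(n+1)}]`. -/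
noncomputable def GAHat :
    Subring (∀ n : ℕ, MonoidAlgebra (ZMod (n + 1)) (Multiplicative (ZMod (n + 1)))) where
  carrier := {f | GACompat f}
  zero_mem' := by intro m n h; simp only [Pi.zero_apply, map_zero]
  one_mem' := by intro m n h; simp only [Pi.one_apply, map_one]
  add_mem' := by
    intro a b ha hb m n h
    have ha' := (ha : GACompat a) m n h
    have hb' := (hb : GACompat b) m n h
    simp only [Pi.add_apply, map_add, ha', hb']
  mul_mem' := by
    intro a b ha hb m n h
    have ha' := (ha : GACompat a) m n h
    have hb' := (hb : GACompat b) m n h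
    simp only [Pi.mul_apply, map_mul, ha', hb']
  neg_mem' := by
    intro a ha m n h
    have ha' := (ha : GACompat a) m n h
    simp only [Pi.neg_apply, map_neg, ha']

/-- The reduction homomorphism `ẑ → ℤ/(n+1)`. -/
def projZ (n : ℕ) : ZHat →+* ZMod (n + 1) :=
  (Pi.evalRingHom (fun k => ZMod (k + 1)) n).comp ZHat.subtype



open Finset in
lemma geomSum_block {S : Type*} [Ring S] (L : ℕ) (x : S) (hx : x ^ L = 1) (s : ℕ) :
    ∑ i ∈ range (s * L), x ^ i = s • ∑ i ∈ range L, x ^ i := by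
  induction s with
  | zero => simp
  | succ s ih =>
      rw [succ_nsmul, ← ih, Nat.succ_mul, Finset.sum_range_add]
      congr 1
      refine Finset.sum_congr rfl fun i _ => ?_
      rw [pow_add, pow_mul', hx, one_pow, one_mul]

lemma pow_eq_pow_of_modEq_of_pow_eq_one {M : Type*} [Monoid M] {L : ℕ} {x : M} (hx : x ^ L = 1)
    {a b : ℕ} (h : a ≡ b [MOD L]) : x ^ a = x ^ b := by
  wlog hle : a ≤ b generalizing a b
  · exact (this h.symm (le_of_not_ge hle)).symm
  obtain ⟨t, ht⟩ := (Nat.modEq_iff_dvd' hle).mp h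
  have hb : b = a + L * t := by omega
  rw [hb, pow_add, pow_mul, hx, one_pow, mul_one]

open Finset in
lemma geomSum_eq_of_modEq {S : Type*} [Ring S] {c L : ℕ} {x : S} (hx : x ^ L = 1)
    (hc : (c : S) = 0) {a b : ℕ} (h : a ≡ b [MOD c * L]) :
    ∑ i ∈ range a, x ^ i = ∑ i ∈ range b, x ^ i := by
  wlog hle : a ≤ b generalizing a b
  · exact (this h.symm (le_of_not_ge hle)).symm
  obtain ⟨t, ht⟩ := (Nat.modEq_iff_dvd' hle).mp h
  have hb : b = a + (t * c) * L := by rw [show (t*c)*L = c*L*t by ring]; omega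
  rw [hb, Finset.sum_range_add]
  have h1 : ∑ i ∈ range ((t * c) * L), x ^ (a + i) = x ^ a * ∑ i ∈ range ((t * c) * L), x ^ i := by
    rw [Finset.mul_sum]; exact Finset.sum_congr rfl fun i _ => (pow_add x a i)
  rw [h1, geomSum_block L x hx, mul_smul,
    show (c • ∑ i ∈ range L, x ^ i) = 0 by rw [nsmul_eq_mul, hc, zero_mul],
    smul_zero, mul_zero, add_zero]

lemma one_sub_mul_geomSum {S : Type*} [Ring S] (x : S) (k : ℕ) :
    (1 - x) * ∑ i ∈ Finset.range k, x ^ i = 1 - x ^ k := by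
  rw [(neg_sub x 1).symm, neg_mul, mul_geom_sum, neg_sub]

namespace Work

lemma zhat_compat (z : ZHat) : ZHatCompat (z : ∀ n, ZMod (n + 1)) := z.2

lemma val_cast_dvd {a b : ℕ} (h : (a + 1) ∣ (b + 1)) (x : ZMod (b + 1)) :
    ((x.val : ℕ) : ZMod (a + 1)) = ZMod.castHom h (ZMod (a + 1)) x := by
  rw [ZMod.castHom_apply, ZMod.natCast_val]

lemma zhat_dvd (d : ℕ) (z : ZHat)
    (h : ∀ l : ℕ, (d + 1) ∣ ((z : ∀ n, ZMod (n + 1)) (l * (d + 1) + d)).val) :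
    ((d + 1 : ℕ) : ZHat) ∣ z := by
  set v : ℕ → ℕ := fun l => ((z : ∀ n, ZMod (n + 1)) (l * (d + 1) + d)).val with hv
  have hcompat : ZHatCompat (fun l => (((v l) / (d + 1) : ℕ) : ZMod (l + 1))) := by
    intro m n hmn
    rw [map_natCast]
    have hdvd : (m * (d + 1) + d + 1) ∣ (n * (d + 1) + d + 1) := by
      have : (m + 1) * (d + 1) ∣ (n + 1) * (d + 1) := mul_dvd_mul_right hmn (d + 1)
      have e1 : (m + 1) * (d + 1) = m * (d + 1) + d + 1 := by ring
      have e2 : (n + 1) * (d + 1) = n * (d + 1) + d + 1 := by ring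
      rwa [e1, e2] at this
    have hzc := z.2 (m * (d + 1) + d) (n * (d + 1) + d) hdvd
    have hme : (v n : ZMod (m * (d + 1) + d + 1)) = (v m : ZMod (m * (d + 1) + d + 1)) := by
      rw [hv]
      simp only []
      rw [val_cast_dvd hdvd, hzc, ZMod.natCast_val, ZMod.cast_id]
    have hmod : v n ≡ v m [MOD (d + 1) * (m + 1)] := by
      have := (ZMod.natCast_eq_natCast_iff _ _ _).mp hme
      have e : m * (d + 1) + d + 1 = (d + 1) * (m + 1) := by ring
      rwa [e] at this
    have hdiv : v n / (d + 1) ≡ v m / (d + 1) [MOD m + 1] := by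
      obtain ⟨a, ha⟩ := h n
      obtain ⟨b, hb⟩ := h m
      have ha' : v n = (d + 1) * a := ha
      have hb' : v m = (d + 1) * b := hb
      rw [ha', hb'] at hmod ⊢
      rw [Nat.mul_div_cancel_left a (Nat.succ_pos d), Nat.mul_div_cancel_left b (Nat.succ_pos d)]
      exact Nat.ModEq.mul_left_cancel' (Nat.succ_ne_zero d) hmod
    exact (ZMod.natCast_eq_natCast_iff _ _ _).mpr hdiv
  refine ⟨⟨fun l => (((v l) / (d + 1) : ℕ) : ZMod (l + 1)), hcompat⟩, ?_⟩
  apply Subtype.ext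
  funext l
  have hcl : ((((d + 1 : ℕ) : ZHat) * ⟨_, hcompat⟩ : ZHat) : ∀ n, ZMod (n + 1)) l
      = ((d + 1 : ℕ) : ZMod (l + 1)) * ((v l / (d + 1) : ℕ) : ZMod (l + 1)) := by
    rfl
  rw [hcl, ← Nat.cast_mul, Nat.mul_div_cancel' (h l)]
  have hd2 : (l + 1) ∣ (l * (d + 1) + d + 1) := ⟨d + 1, by ring⟩
  rw [val_cast_dvd hd2, z.2 l (l * (d + 1) + d) hd2]

end Work

namespace Work2

lemma zhat_dvd' (d : ℕ) (z : ZHat) (J : ℕ) (hdJ : (d + 1) ∣ (J + 1))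
    (h0 : (z : ∀ n, ZMod (n + 1)) J = 0) : ((d + 1 : ℕ) : ZHat) ∣ z := by
  apply Work.zhat_dvd
  intro l
  have hd : (z : ∀ n, ZMod (n + 1)) d = 0 := by rw [← z.2 d J hdJ, h0, map_zero]
  have hbig : (d + 1) ∣ (l * (d + 1) + d + 1) := ⟨l + 1, by ring⟩
  have h2 := z.2 d (l * (d + 1) + d) hbig
  have h3 : (((z : ∀ n, ZMod (n + 1)) (l * (d + 1) + d)).val : ZMod (d + 1)) = 0 := by
    rw [Work.val_cast_dvd hbig, h2, hd]
  exact (ZMod.natCast_eq_zero_iff _ _).mp h3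

noncomputable abbrev tau (n : ℕ) : MonoidAlgebra (ZMod (n + 1)) (Multiplicative (ZMod (n + 1))) :=
  MonoidAlgebra.of (ZMod (n + 1)) (Multiplicative (ZMod (n + 1)))
    (Multiplicative.ofAdd (1 : ZMod (n + 1)))

lemma tau_pow (n k : ℕ) :
    tau n ^ k = MonoidAlgebra.of (ZMod (n + 1)) (Multiplicative (ZMod (n + 1)))
      (Multiplicative.ofAdd ((k : ZMod (n + 1)))) := by
  rw [← map_pow]
  congr 1
  rw [← ofAdd_nsmul, nsmul_eq_mul, mul_one]

lemma tau_pow_card (n : ℕ) : tau n ^ (n + 1) = 1 := by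
  rw [tau_pow, ZMod.natCast_self, ofAdd_zero, map_one]

lemma GATrans_of (m n : ℕ) (h : (m + 1) ∣ (n + 1)) (g : ZMod (n + 1)) :
    GATrans m n h (MonoidAlgebra.of _ _ (Multiplicative.ofAdd g)) =
      MonoidAlgebra.of (ZMod (m + 1)) (Multiplicative (ZMod (m + 1)))
        (Multiplicative.ofAdd (ZMod.castHom h (ZMod (m + 1)) g)) := by
  simp only [GATrans, MonoidAlgebra.liftNCRingHom, MonoidAlgebra.of_apply,
    MonoidAlgebra.liftNC_single]
  simp [MonoidAlgebra.singleOneRingHom, MonoidAlgebra.single_mul_single]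
  congr 1
  exact ZMod.cast_one h

lemma GATrans_tau (m n : ℕ) (h : (m + 1) ∣ (n + 1)) : GATrans m n h (tau n) = tau m := by
  rw [tau, GATrans_of, map_one]

end Work2

namespace Work3
open Work2

noncomputable abbrev iot (n : ℕ) :
    ZMod (n + 1) →+* MonoidAlgebra (ZMod (n + 1)) (Multiplicative (ZMod (n + 1))) :=
  MonoidAlgebra.singleOneRingHom

lemma Rn_char (n : ℕ) :
    ((n + 1 : ℕ) : MonoidAlgebra (ZMod (n + 1)) (Multiplicative (ZMod (n + 1)))) = 0 := by
  have := map_natCast (iot n) (n + 1)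
  rw [ZMod.natCast_self, map_zero] at this
  exact this.symm

lemma MatRn_char (r n : ℕ) :
    ((n + 1 : ℕ) : Matrix (Fin r) (Fin r)
      (MonoidAlgebra (ZMod (n + 1)) (Multiplicative (ZMod (n + 1))))) = 0 := by
  have h2 := map_natCast ((Matrix.scalar (Fin r)) :
    MonoidAlgebra (ZMod (n + 1)) (Multiplicative (ZMod (n + 1))) →+* _) (n + 1)
  rw [Rn_char, map_zero] at h2
  exact h2.symm

variable (r : ℕ) (B : Matrix (Fin r) (Fin r) ℤ)

noncomputable abbrev Bmat (n : ℕ) :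
    Matrix (Fin r) (Fin r) (MonoidAlgebra (ZMod (n + 1)) (Multiplicative (ZMod (n + 1)))) :=
  B.map (fun z => (z : MonoidAlgebra (ZMod (n + 1)) (Multiplicative (ZMod (n + 1)))))

abbrev BZ (n : ℕ) : Matrix (Fin r) (Fin r) (ZMod (n + 1)) :=
  B.map (fun z => (z : ZMod (n + 1)))

noncomputable abbrev Xm (n : ℕ) :
    Matrix (Fin r) (Fin r) (MonoidAlgebra (ZMod (n + 1)) (Multiplicative (ZMod (n + 1)))) :=
  tau n • Bmat r B n

noncomputable abbrev Ncard (n : ℕ) : ℕ := Nat.card (Matrix.GeneralLinearGroup (Fin r) (ZMod (n + 1)))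

lemma Ncard_pos (n : ℕ) : 0 < Ncard r n := Nat.card_pos

lemma Bmat_eq_map (n : ℕ) : Bmat r B n = (BZ r B n).map (iot n) := by
  ext i j
  simp only [Matrix.map_apply, map_intCast]

lemma BZ_pow_card (hB : IsUnit B.det) (n : ℕ) : (BZ r B n) ^ (Ncard r n) = 1 := by
  have hdet : IsUnit (BZ r B n).det := by
    have : (BZ r B n).det = ((Int.castRingHom (ZMod (n + 1))) B.det) := by
      rw [RingHom.map_det]; rfl
    rw [this]
    exact hB.map (Int.castRingHom (ZMod (n + 1)))
  obtain ⟨u, hu⟩ := (Matrix.isUnit_iff_isUnit_det _).mpr hdet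
  have hpow : u ^ (Ncard r n) = 1 := pow_card_eq_one'
  calc (BZ r B n) ^ (Ncard r n) = (u : Matrix (Fin r) (Fin r) (ZMod (n + 1))) ^ (Ncard r n) := by
        rw [hu]
    _ = ((u ^ (Ncard r n) : _ˣ) : Matrix (Fin r) (Fin r) (ZMod (n + 1))) := by
        rw [Units.val_pow_eq_pow_val]
    _ = 1 := by rw [hpow, Units.val_one]

lemma Bmat_pow_card (hB : IsUnit B.det) (n : ℕ) : (Bmat r B n) ^ (Ncard r n) = 1 := by
  rw [Bmat_eq_map, ← RingHom.mapMatrix_apply, ← map_pow, BZ_pow_card r B hB, map_one]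

lemma X_pow_L (hB : IsUnit B.det) (n : ℕ) : (Xm r B n) ^ ((n + 1) * Ncard r n) = 1 := by
  rw [Xm, smul_pow, pow_mul, tau_pow_card, one_pow, pow_mul', Bmat_pow_card r B hB, one_pow,
    one_smul]

lemma GATrans_mapMatrix_X (m n : ℕ) (h : (m + 1) ∣ (n + 1)) :
    (Xm r B n).map (GATrans m n h) = Xm r B m := by
  ext i j
  simp only [Xm, Matrix.map_apply, Matrix.smul_apply, Bmat, smul_eq_mul, map_mul,
    GATrans_tau, map_intCast]

end Work3

namespace Work4
open Work Work2 Work3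

lemma q_mem (r : ℕ) (B : Matrix (Fin r) (Fin r) ℤ) (hB : IsUnit B.det) (k : ℕ → ℕ)
    (hk : ∀ m n : ℕ, (m + 1) ∣ (n + 1) →
      k n ≡ k m [MOD (m + 1) * ((m + 1) * Ncard r m)]) :
    GACompat (fun n => (∑ i ∈ Finset.range (k n), (Xm r B n) ^ i).det) := by
  intro m n h
  rw [RingHom.map_det]
  have hmap : (∑ i ∈ Finset.range (k n), (Xm r B n) ^ i).map (GATrans m n h)
      = ∑ i ∈ Finset.range (k n), (Xm r B m) ^ i := by
    rw [← RingHom.mapMatrix_apply, map_sum]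
    refine Finset.sum_congr rfl fun i _ => ?_
    rw [map_pow, RingHom.mapMatrix_apply, GATrans_mapMatrix_X]
  rw [RingHom.mapMatrix_apply, hmap]
  show _ = (∑ i ∈ Finset.range (k m), (Xm r B m) ^ i).det
  congr 1
  exact geomSum_eq_of_modEq (X_pow_L r B hB m) (MatRn_char r m) (hk m n h)

lemma q'_mem (r : ℕ) (B : Matrix (Fin r) (Fin r) ℤ) (hB : IsUnit B.det) (k k' : ℕ → ℕ)
    (hk : ∀ m n : ℕ, (m + 1) ∣ (n + 1) →
      k n ≡ k m [MOD (m + 1) * ((m + 1) * Ncard r m)])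
    (hk' : ∀ m n : ℕ, (m + 1) ∣ (n + 1) →
      k' n ≡ k' m [MOD (m + 1) * ((m + 1) * Ncard r m)]) :
    GACompat (fun n => (∑ i ∈ Finset.range (k' n), ((Xm r B n) ^ (k n)) ^ i).det) := by
  intro m n h
  rw [RingHom.map_det]
  have hXpow : (Xm r B m) ^ (k n) = (Xm r B m) ^ (k m) :=
    pow_eq_pow_of_modEq_of_pow_eq_one (X_pow_L r B hB m)
      ((hk m n h).of_dvd (dvd_mul_left _ _))
  have hmap : (∑ i ∈ Finset.range (k' n), ((Xm r B n) ^ (k n)) ^ i).map (GATrans m n h)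
      = ∑ i ∈ Finset.range (k' n), ((Xm r B m) ^ (k m)) ^ i := by
    rw [← RingHom.mapMatrix_apply, map_sum]
    refine Finset.sum_congr rfl fun i _ => ?_
    rw [map_pow, map_pow, RingHom.mapMatrix_apply, GATrans_mapMatrix_X, hXpow]
  rw [RingHom.mapMatrix_apply, hmap]
  show _ = (∑ i ∈ Finset.range (k' m), ((Xm r B m) ^ (k m)) ^ i).det
  congr 1
  refine geomSum_eq_of_modEq ?_ (MatRn_char r m) (hk' m n h)
  rw [← pow_mul, mul_comm, pow_mul, X_pow_L r B hB m, one_pow]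

lemma proj_aeval_det (r n : ℕ) (M : Matrix (Fin r) (Fin r) ℤ) (t : GAHat) :
    ((Polynomial.aeval t
        ((1 - (Polynomial.X : Polynomial ℤ) • M.map (fun z => Polynomial.C z)).det) : GAHat) :
      ∀ j, MonoidAlgebra (ZMod (j + 1)) (Multiplicative (ZMod (j + 1)))) n
      = (1 - ((t : ∀ j, MonoidAlgebra (ZMod (j + 1)) (Multiplicative (ZMod (j + 1)))) n) •
          M.map (fun z => (z : MonoidAlgebra (ZMod (n + 1)) (Multiplicative (ZMod (n + 1)))))).det := by
  set Rn := MonoidAlgebra (ZMod (n + 1)) (Multiplicative (ZMod (n + 1)))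
  let g : GAHat →+* Rn :=
    (Pi.evalRingHom (fun j => MonoidAlgebra (ZMod (j + 1)) (Multiplicative (ZMod (j + 1)))) n).comp
      (Subring.subtype GAHat)
  show g (Polynomial.aeval t _) = _
  rw [Polynomial.aeval_def, Polynomial.hom_eval₂]
  have hcomp : g.comp (algebraMap ℤ GAHat) = Int.castRingHom Rn := Subsingleton.elim _ _
  rw [hcomp]
  rw [← Polynomial.coe_eval₂RingHom, RingHom.map_det]
  have hgt : g t = (t : ∀ j, MonoidAlgebra (ZMod (j + 1)) (Multiplicative (ZMod (j + 1)))) n := rfl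
  congr 1
  ext i j : 1
  simp only [Matrix.map_apply, Matrix.sub_apply, Matrix.smul_apply, Matrix.one_apply,
    smul_eq_mul, map_sub, map_mul, Polynomial.coe_eval₂RingHom, Polynomial.eval₂_X,
    Polynomial.eval₂_C, map_one, map_zero, hgt, Polynomial.eval₂_one, Polynomial.eval₂_zero,
    Polynomial.eval₂_mul]
  have hX : (Polynomial.eval₂RingHom (Int.castRingHom Rn)
      ((t : ∀ j, MonoidAlgebra (ZMod (j + 1)) (Multiplicative (ZMod (j + 1)))) n))
      Polynomial.X
      = ((t : ∀ j, MonoidAlgebra (ZMod (j + 1)) (Multiplicative (ZMod (j + 1)))) n) :=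
    Polynomial.eval₂_X _ _
  have hCa : ∀ z : ℤ, (Polynomial.eval₂RingHom (Int.castRingHom Rn)
      ((t : ∀ j, MonoidAlgebra (ZMod (j + 1)) (Multiplicative (ZMod (j + 1)))) n))
      (z : Polynomial ℤ) = (z : Rn) := fun z => map_intCast _ z
  split_ifs <;> simp [← Polynomial.coe_eval₂RingHom, hX, hCa]

end Work4

namespace Work5
open Work Work2 Work3

lemma level_a (r n : ℕ) (A B : Matrix (Fin r) (Fin r) ℤ) (C : Matrix (Fin r) (Fin r) ZHat)
    (U : (Matrix (Fin r) (Fin r) ZHat)ˣ)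
    (hU : U.val * (A.map (fun z => (z : ZHat))) = C * U.val)
    (k : ℕ)
    (hCn : C.map (fun x => projZ n x) = (BZ r B n) ^ k)
    (ε : MonoidAlgebra (ZMod (n + 1)) (Multiplicative (ZMod (n + 1)))) (hε : ε = tau n ^ k) :
    (1 - ε • (A.map (fun z =>
        (z : MonoidAlgebra (ZMod (n + 1)) (Multiplicative (ZMod (n + 1))))))).det
      = (1 - (Xm r B n) ^ k).det := by
  let ρ : ZHat →+* (MonoidAlgebra (ZMod (n + 1)) (Multiplicative (ZMod (n + 1)))) := (iot n).comp (projZ n)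
  let Φ : Matrix (Fin r) (Fin r) ZHat →+* Matrix (Fin r) (Fin r) (MonoidAlgebra (ZMod (n + 1)) (Multiplicative (ZMod (n + 1)))) := ρ.mapMatrix
  set A' : Matrix (Fin r) (Fin r) (MonoidAlgebra (ZMod (n + 1)) (Multiplicative (ZMod (n + 1)))) := A.map (fun z => (z : (MonoidAlgebra (ZMod (n + 1)) (Multiplicative (ZMod (n + 1)))))) with hA'
  have hA : Φ (A.map (fun z => (z : ZHat))) = A' := by
    rw [hA']
    show (A.map (fun z => (z : ZHat))).map ρ = _
    rw [Matrix.map_map]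
    ext i j
    simp only [Matrix.map_apply, Function.comp_apply, map_intCast]
  have hCmat : Φ C = (Bmat r B n) ^ k := by
    show C.map ρ = _
    have h1 : C.map ρ = (C.map (fun x => projZ n x)).map (iot n) := by
      rw [Matrix.map_map]; rfl
    rw [h1, hCn, ← RingHom.mapMatrix_apply, map_pow, RingHom.mapMatrix_apply, ← Bmat_eq_map]
  let V := Units.map Φ.toMonoidHom U
  have hVcoe : (V : Matrix (Fin r) (Fin r) (MonoidAlgebra (ZMod (n + 1)) (Multiplicative (ZMod (n + 1))))) = Φ U.val := rfl
  set Vm : Matrix (Fin r) (Fin r) (MonoidAlgebra (ZMod (n + 1)) (Multiplicative (ZMod (n + 1)))) := (V : Matrix (Fin r) (Fin r) (MonoidAlgebra (ZMod (n + 1)) (Multiplicative (ZMod (n + 1))))) with hVm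
  set Vi : Matrix (Fin r) (Fin r) (MonoidAlgebra (ZMod (n + 1)) (Multiplicative (ZMod (n + 1)))) := ((V⁻¹ : (Matrix (Fin r) (Fin r) (MonoidAlgebra (ZMod (n + 1)) (Multiplicative (ZMod (n + 1)))))ˣ) :
    Matrix (Fin r) (Fin r) (MonoidAlgebra (ZMod (n + 1)) (Multiplicative (ZMod (n + 1))))) with hVi
  have hinv : Vi * Vm = 1 := by
    rw [hVm, hVi, ← Units.val_mul, inv_mul_cancel, Units.val_one]
  have hVA : Vm * A' = (Bmat r B n) ^ k * Vm := by
    have h2 := congrArg Φ hU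
    rw [map_mul, map_mul, hA, hCmat] at h2
    exact h2
  have hAeq : A' = Vi * ((Bmat r B n) ^ k * Vm) := by
    rw [← hVA, ← mul_assoc, hinv, one_mul]
  have key : 1 - ε • A' = Vi * (1 - ε • ((Bmat r B n) ^ k)) * Vm := by
    rw [Matrix.mul_sub, Matrix.sub_mul, mul_one, hinv, mul_smul_comm, smul_mul_assoc,
      mul_assoc, ← hAeq]
  rw [key]
  have hdet := Matrix.det_units_conj' V (1 - ε • ((Bmat r B n) ^ k))
  rw [← hVm, ← hVi] at hdet
  rw [hdet, hε, ← smul_pow]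

end Work5

set_option maxHeartbeats 1000000 in
set_option synthInstance.maxHeartbeats 400000 in
/-- Let `A, B ∈ GL(r, ℤ)`, let `μ ∈ ẑˣ`, and suppose `A` is conjugate
in `GL(r, ẑ)` to the `μ`-th power `C = B^μ` of `B` (characterized by: every reduction of
`C` mod `n+1` is `B^k` for any natural `k ≡ μ` modulo the order of `GL(r, ℤ/(n+1))`).
Let `a(t) = det(1 - tA)` and `b(t) = det(1 - tB)`.  Then the principal ideals
`(a(t^μ))` and `(b(t))` of the completed group algebra `ẑ[[t^ẑ]]` coincide, where `t^μ`
and `t` denote the group-like elements of `ẑ[[t^ẑ]]` with exponents `μ` and `1`. -/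
theorem charpoly_ideal_eq_of_conj_mu_power
    (r : ℕ) (A B : Matrix (Fin r) (Fin r) ℤ)
    (hA : IsUnit A.det) (hB : IsUnit B.det)
    (μ : ZHatˣ)
    (C : Matrix (Fin r) (Fin r) ZHat)
    (hC : ∀ n k : ℕ,
      ((Nat.card (Matrix.GeneralLinearGroup (Fin r) (ZMod (n + 1))) : ZHat)) ∣
          ((μ : ZHat) - (k : ZHat)) →
        C.map (fun x => projZ n x) = (B.map (fun z => (z : ZMod (n + 1)))) ^ k)
    (hconj : ∃ U : (Matrix (Fin r) (Fin r) ZHat)ˣ,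
      U.val * (A.map (fun z => (z : ZHat))) = C * U.val)
    (tμ tOne : GAHat)
    (htμ : ∀ n : ℕ,
      (tμ : ∀ n : ℕ, MonoidAlgebra (ZMod (n + 1)) (Multiplicative (ZMod (n + 1)))) n =
        MonoidAlgebra.of (ZMod (n + 1)) (Multiplicative (ZMod (n + 1)))
          (Multiplicative.ofAdd (((μ : ZHat) : ∀ n : ℕ, ZMod (n + 1)) n)))
    (htOne : ∀ n : ℕ,
      (tOne : ∀ n : ℕ, MonoidAlgebra (ZMod (n + 1)) (Multiplicative (ZMod (n + 1)))) n =
        MonoidAlgebra.of (ZMod (n + 1)) (Multiplicative (ZMod (n + 1)))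
          (Multiplicative.ofAdd (1 : ZMod (n + 1)))) :
    Ideal.span {Polynomial.aeval tμ
        ((1 - (Polynomial.X : Polynomial ℤ) • A.map (fun z => Polynomial.C z)).det)} =
      Ideal.span {Polynomial.aeval tOne
        ((1 - (Polynomial.X : Polynomial ℤ) • B.map (fun z => Polynomial.C z)).det)} := by
  classical
  obtain ⟨U, hU⟩ := hconj
  -- numerics
  have hNpos : ∀ j : ℕ, 0 < Work3.Ncard r j := fun j => Work3.Ncard_pos r j
  set T : ℕ → ℕ := fun n => ∑ j ∈ Finset.range (n + 1), (j + 1) * (j + 1) * Work3.Ncard r j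
    with hT
  have hTpos : ∀ n, 0 < T n := by
    intro n
    refine Finset.sum_pos (fun j _ => ?_) ⟨0, Finset.mem_range.mpr (Nat.succ_pos n)⟩
    exact Nat.mul_pos (Nat.mul_pos (Nat.succ_pos j) (Nat.succ_pos j)) (hNpos j)
  set J : ℕ → ℕ := fun n => Nat.factorial (T n) - 1 with hJdef
  have hJ : ∀ n, J n + 1 = Nat.factorial (T n) := fun n => Nat.succ_pred_eq_of_pos (Nat.factorial_pos _)
  have hterm : ∀ n, (n + 1) * ((n + 1) * Work3.Ncard r n) ∣ (J n + 1) := by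
    intro n
    rw [hJ]
    refine Nat.dvd_factorial (Nat.mul_pos (Nat.succ_pos n) (Nat.mul_pos (Nat.succ_pos n) (hNpos n))) ?_
    rw [← mul_assoc]
    exact Finset.single_le_sum (f := fun j => (j + 1) * (j + 1) * Work3.Ncard r j)
      (fun i _ => Nat.zero_le _) (Finset.mem_range.mpr (Nat.lt_succ_self n))
  have hn1 : ∀ n, (n + 1) ∣ (J n + 1) :=
    fun n => dvd_trans (dvd_mul_right _ _) (hterm n)
  have hNdvd : ∀ n, Work3.Ncard r n ∣ (J n + 1) :=
    fun n => dvd_trans ((dvd_mul_left _ _).mul_left (n + 1)) (hterm n)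
  have hLdvd : ∀ n, (n + 1) * Work3.Ncard r n ∣ (J n + 1) :=
    fun n => dvd_trans (mul_dvd_mul_left (n + 1) (dvd_mul_left _ _)) (hterm n)
  have hJmono : ∀ m n, (m + 1) ∣ (n + 1) → (J m + 1) ∣ (J n + 1) := by
    intro m n h
    rw [hJ, hJ]
    refine Nat.factorial_dvd_factorial ?_
    refine Finset.sum_le_sum_of_subset (Finset.range_subset_range.mpr ?_)
    have := Nat.le_of_dvd (Nat.succ_pos n) h
    omega
  -- sequences
  set μz : ZHat := (μ : ZHat) with hμz
  set νz : ZHat := ((μ⁻¹ : ZHatˣ) : ZHat) with hνz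
  set kk : ℕ → ℕ := fun n => ((μz : ∀ j, ZMod (j + 1)) (J n)).val with hkk
  set kk' : ℕ → ℕ := fun n => ((νz : ∀ j, ZMod (j + 1)) (J n)).val with hkk'
  have hvalcast : ∀ (z : ZHat) (n : ℕ),
      ((((z : ∀ j, ZMod (j + 1)) (J n)).val : ℕ) : ZMod (J n + 1))
        = (z : ∀ j, ZMod (j + 1)) (J n) := by
    intro z n
    rw [ZMod.natCast_val, ZMod.cast_id]
  have hmodJ : ∀ (z : ZHat) (m n : ℕ), (m + 1) ∣ (n + 1) →
      ((z : ∀ j, ZMod (j + 1)) (J n)).val ≡ ((z : ∀ j, ZMod (j + 1)) (J m)).val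
        [MOD (J m + 1)] := by
    intro z m n h
    apply (ZMod.natCast_eq_natCast_iff _ _ _).mp
    rw [Work.val_cast_dvd (hJmono m n h), z.2 _ _ (hJmono m n h), hvalcast]
  have hkmod : ∀ m n, (m + 1) ∣ (n + 1) →
      kk n ≡ kk m [MOD (m + 1) * ((m + 1) * Work3.Ncard r m)] :=
    fun m n h => (hmodJ μz m n h).of_dvd (hterm m)
  have hk'mod : ∀ m n, (m + 1) ∣ (n + 1) →
      kk' n ≡ kk' m [MOD (m + 1) * ((m + 1) * Work3.Ncard r m)] :=
    fun m n h => (hmodJ νz m n h).of_dvd (hterm m)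
  -- hC applied
  have hCn : ∀ n, C.map (fun x => projZ n x) = (Work3.BZ r B n) ^ (kk n) := by
    intro n
    apply hC
    have hdn : Work3.Ncard r n - 1 + 1 = Work3.Ncard r n :=
      Nat.succ_pred_eq_of_pos (hNpos n)
    have h0 : ((μz - ((kk n : ℕ) : ZHat) : ZHat) : ∀ j, ZMod (j + 1)) (J n) = 0 := by
      show projZ (J n) (μz - ((kk n : ℕ) : ZHat)) = 0
      rw [map_sub, map_natCast]
      have : projZ (J n) μz = (μz : ∀ j, ZMod (j + 1)) (J n) := rfl
      rw [this, hkk]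
      simp only []
      rw [hvalcast μz n, sub_self]
    have hdvd := Work2.zhat_dvd' (Work3.Ncard r n - 1) (μz - ((kk n : ℕ) : ZHat)) (J n)
      (by rw [hdn]; exact hNdvd n) h0
    rw [hdn] at hdvd
    exact hdvd
  have hkcomp : ∀ n, ((kk n : ℕ) : ZMod (n + 1)) = (μz : ∀ j, ZMod (j + 1)) n := by
    intro n
    rw [hkk]
    simp only []
    rw [Work.val_cast_dvd (hn1 n), μz.2 n (J n) (hn1 n)]
  have hkk1 : ∀ n, kk n * kk' n ≡ 1 [MOD J n + 1] := by
    intro n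
    apply (ZMod.natCast_eq_natCast_iff _ _ _).mp
    rw [Nat.cast_mul, Nat.cast_one, hkk, hkk']
    simp only []
    rw [hvalcast μz n, hvalcast νz n]
    have : (μz : ∀ j, ZMod (j + 1)) (J n) * (νz : ∀ j, ZMod (j + 1)) (J n)
        = ((μz * νz : ZHat) : ∀ j, ZMod (j + 1)) (J n) := rfl
    rw [this, hμz, hνz, Units.mul_inv]
    rfl
  have hXJ : ∀ n, (Work3.Xm r B n) ^ (J n + 1) = 1 := by
    intro n
    obtain ⟨c, hc⟩ := hLdvd n
    rw [hc, pow_mul, Work3.X_pow_L r B hB n, one_pow]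
  -- q and q'
  have hqmem : (fun n => (∑ i ∈ Finset.range (kk n), (Work3.Xm r B n) ^ i).det) ∈ GAHat :=
    Work4.q_mem r B hB kk hkmod
  have hq'mem : (fun n =>
      (∑ i ∈ Finset.range (kk' n), ((Work3.Xm r B n) ^ (kk n)) ^ i).det) ∈ GAHat :=
    Work4.q'_mem r B hB kk kk' hkmod hk'mod
  set q : GAHat := ⟨_, hqmem⟩ with hq
  set q' : GAHat := ⟨_, hq'mem⟩ with hq'
  set aH : GAHat := Polynomial.aeval tμ
    ((1 - (Polynomial.X : Polynomial ℤ) • A.map (fun z => Polynomial.C z)).det) with haH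
  set bH : GAHat := Polynomial.aeval tOne
    ((1 - (Polynomial.X : Polynomial ℤ) • B.map (fun z => Polynomial.C z)).det) with hbH
  have hπa : ∀ n, (aH : ∀ j, MonoidAlgebra (ZMod (j + 1)) (Multiplicative (ZMod (j + 1)))) n
      = (1 - (Work3.Xm r B n) ^ (kk n)).det := by
    intro n
    rw [haH, Work4.proj_aeval_det r n A tμ]
    refine Work5.level_a r n A B C U hU (kk n) (hCn n) _ ?_
    rw [htμ n, Work2.tau_pow n (kk n), hkcomp n]
  have hπb : ∀ n, (bH : ∀ j, MonoidAlgebra (ZMod (j + 1)) (Multiplicative (ZMod (j + 1)))) n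
      = (1 - Work3.Xm r B n).det := by
    intro n
    rw [hbH, Work4.proj_aeval_det r n B tOne, htOne n]
  have hab : aH = bH * q := by
    apply Subtype.ext
    funext n
    have hc : ((bH * q : GAHat) : ∀ j, MonoidAlgebra (ZMod (j + 1))
        (Multiplicative (ZMod (j + 1)))) n
        = (bH : ∀ j, MonoidAlgebra (ZMod (j + 1)) (Multiplicative (ZMod (j + 1)))) n *
          (q : ∀ j, MonoidAlgebra (ZMod (j + 1)) (Multiplicative (ZMod (j + 1)))) n := rfl
    rw [hc, hπa n, hπb n]
    show _ = _ * (∑ i ∈ Finset.range (kk n), (Work3.Xm r B n) ^ i).det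
    rw [← Matrix.det_mul, one_sub_mul_geomSum]
  have hba : bH = aH * q' := by
    apply Subtype.ext
    funext n
    have hc : ((aH * q' : GAHat) : ∀ j, MonoidAlgebra (ZMod (j + 1))
        (Multiplicative (ZMod (j + 1)))) n
        = (aH : ∀ j, MonoidAlgebra (ZMod (j + 1)) (Multiplicative (ZMod (j + 1)))) n *
          (q' : ∀ j, MonoidAlgebra (ZMod (j + 1)) (Multiplicative (ZMod (j + 1)))) n := rfl
    rw [hc, hπa n, hπb n]
    show _ = _ * (∑ i ∈ Finset.range (kk' n), ((Work3.Xm r B n) ^ (kk n)) ^ i).det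
    rw [← Matrix.det_mul, one_sub_mul_geomSum ((Work3.Xm r B n) ^ (kk n)) (kk' n), ← pow_mul]
    have hpow : (Work3.Xm r B n) ^ (kk n * kk' n) = (Work3.Xm r B n) ^ 1 :=
      pow_eq_pow_of_modEq_of_pow_eq_one (hXJ n) (hkk1 n)
    rw [hpow, pow_one]
  apply le_antisymm
  · rw [Ideal.span_singleton_le_span_singleton]
    exact ⟨q, hab⟩
  · rw [Ideal.span_singleton_le_span_singleton]
    exact ⟨q', hba⟩
end
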